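/- Let g_j, j ∈ I (finite) be extended-real-valued functions on ℝⁿ, g := sup_{j∈I} g_j, x̄ ∈ dom g, I(x̄) := {j : g_j(x̄) = g(x̄)}, K ⊂ ∩_{j∈I(x̄)} K_j, and γ_m := min_{j∈I(x̄)} γ_j. Then the closed convex hull of ∪_{j∈I(x̄)} ∂^{K_j}_{β,γ_j} g_j(x̄) is contained in ∂^{K}_{β,γ_m} g(x̄). -/

import Mathlib

open RealInnerProductSpace Set Filter Topology

variable {E : Type*} [NormedAddCommGroup E] [InnerProductSpace ℝ E]

/-- The `(β, γ, K)`-strong subdifferential of `h` at `x`. -/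
def strongSubdiff (h : E → EReal) (K : Set E) (β γ : ℝ) (x : E) : Set E :=
  {ξ | ∀ y ∈ K, ∀ l ∈ Icc (0:ℝ) 1,
    h x + (((l / β) * ⟪ξ, y - x⟫
      + (l / 2) * (γ - l / β - l * γ) * ‖y - x‖ ^ 2 : ℝ) : EReal)
      ≤ max (h y) (h x)}

private lemma aux_closed {f : E → ℝ} (hf : Continuous f) (c M : EReal) :
    IsClosed {ξ : E | c + (f ξ : EReal) ≤ M} := by
  induction c using EReal.rec with
  | bot => simp
  | top =>
    by_cases hM : M = ⊤
    · simp [hM]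
    · have : {ξ : E | (⊤ : EReal) + (f ξ : EReal) ≤ M} = ∅ := by
        ext ξ
        simp only [mem_setOf_eq, mem_empty_iff_false, iff_false]
        rw [EReal.top_add_of_ne_bot (EReal.coe_ne_bot _)]
        exact fun h => hM (top_le_iff.mp h)
      rw [this]; exact isClosed_empty
  | coe a =>
    induction M using EReal.rec with
    | bot =>
      have : {ξ : E | (a : EReal) + (f ξ : EReal) ≤ ⊥} = ∅ := by
        ext ξ
        simp only [mem_setOf_eq, mem_empty_iff_false, iff_false, le_bot_iff]
        rw [← EReal.coe_add]
        exact EReal.coe_ne_bot _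
      rw [this]; exact isClosed_empty
    | top => simp
    | coe m =>
      have : {ξ : E | (a : EReal) + (f ξ : EReal) ≤ (m : EReal)} =
          {ξ : E | a + f ξ ≤ m} := by
        ext ξ; rw [mem_setOf_eq, ← EReal.coe_add, EReal.coe_le_coe_iff]; rfl
      rw [this]
      exact isClosed_le (continuous_const.add hf) continuous_const

private lemma strongSubdiff_isClosed (h : E → EReal) (K : Set E) (β γ : ℝ) (x : E) :
    IsClosed (strongSubdiff h K β γ x) := by
  have : strongSubdiff h K β γ x = ⋂ y ∈ K, ⋂ l ∈ Icc (0:ℝ) 1,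
      {ξ : E | h x + (((l / β) * ⟪ξ, y - x⟫
        + (l / 2) * (γ - l / β - l * γ) * ‖y - x‖ ^ 2 : ℝ) : EReal)
        ≤ max (h y) (h x)} := by
    ext ξ
    constructor
    · intro h' ; rw [mem_iInter₂]; intro y hy; rw [mem_iInter₂]; intro l hl
      exact h' y hy l hl
    · intro h' y hy l hl
      have := mem_iInter₂.mp h' y hy
      exact mem_iInter₂.mp this l hl
  rw [this]
  refine isClosed_biInter fun y _ => isClosed_biInter fun l _ => ?_
  exact aux_closed (by
    apply Continuous.add
    · exact continuous_const.mul (continuous_id.inner continuous_const)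
    · exact continuous_const) _ _

private lemma strongSubdiff_convex (h : E → EReal) (K : Set E) (β γ : ℝ) (x : E) :
    Convex ℝ (strongSubdiff h K β γ x) := by
  intro ξ₁ h₁ ξ₂ h₂ a b ha hb hab
  have hb1 : b = 1 - a := by linarith
  subst hb1
  intro y hy l hl
  have e1 := h₁ y hy l hl
  have e2 := h₂ y hy l hl
  set C : ℝ := (l / 2) * (γ - l / β - l * γ) * ‖y - x‖ ^ 2 with hC
  set r₁ : ℝ := (l / β) * ⟪ξ₁, y - x⟫ + C
  set r₂ : ℝ := (l / β) * ⟪ξ₂, y - x⟫ + C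
  have hr : (l / β) * ⟪a • ξ₁ + (1 - a) • ξ₂, y - x⟫ + C = a * r₁ + (1 - a) * r₂ := by
    simp only [r₁, r₂, inner_add_left, real_inner_smul_left]
    ring
  rw [hr]
  rcases le_total r₁ r₂ with hle | hle
  · have : a * r₁ + (1 - a) * r₂ ≤ r₂ := by nlinarith [mul_nonneg ha (sub_nonneg.mpr hle)]
    calc h x + ((a * r₁ + (1 - a) * r₂ : ℝ) : EReal)
        ≤ h x + (r₂ : EReal) := add_le_add le_rfl (EReal.coe_le_coe_iff.mpr this)
      _ ≤ _ := e2
  · have : a * r₁ + (1 - a) * r₂ ≤ r₁ := by nlinarith [mul_nonneg hb (sub_nonneg.mpr hle)]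
    calc h x + ((a * r₁ + (1 - a) * r₂ : ℝ) : EReal)
        ≤ h x + (r₁ : EReal) := add_le_add le_rfl (EReal.coe_le_coe_iff.mpr this)
      _ ≤ _ := e1

theorem closed_convex_hull_union_strong_subdiff_subset_strong_subdiff_sup
    {I : Type*} [Fintype I] (g : I → E → EReal)
    (β : ℝ) (hβ : 0 < β) (γ : I → ℝ) (hγ : ∀ j, 0 ≤ γ j)
    (K : Set E) (Kj : I → Set E) (xb : E)
    (hdom : (⨆ j, g j xb) ≠ ⊤)
    (hne : {j | g j xb = ⨆ i, g i xb}.Nonempty)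
    (hK : K ⊆ ⋂ j ∈ {j | g j xb = ⨆ i, g i xb}, Kj j)
    (γm : ℝ) (hγm : γm = sInf (γ '' {j | g j xb = ⨆ i, g i xb})) :
    closure (convexHull ℝ
        (⋃ j ∈ {j | g j xb = ⨆ i, g i xb}, strongSubdiff (g j) (Kj j) β (γ j) xb))
      ⊆ strongSubdiff (fun x => ⨆ j, g j x) K β γm xb := by
  have hclosed := strongSubdiff_isClosed (fun x => ⨆ j, g j x) K β γm xb
  have hconv := strongSubdiff_convex (fun x => ⨆ j, g j x) K β γm xb
  refine closure_minimal (convexHull_min ?_ hconv) hclosed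
  refine Set.iUnion₂_subset fun j hj => ?_
  intro ξ hξ y hy l hl
  have hyj : y ∈ Kj j := by
    have := hK hy
    exact Set.mem_iInter₂.mp this j hj
  have key := hξ y hyj l hl
  -- γm ≤ γ j
  have hjm : γm ≤ γ j := by
    rw [hγm]
    apply csInf_le
    · exact (Set.Finite.image _ (Set.toFinite _)).bddBelow
    · exact Set.mem_image_of_mem _ hj
  obtain ⟨hl0, hl1⟩ := hl
  have hquad : (l / 2) * (γm - l / β - l * γm) * ‖y - xb‖ ^ 2
      ≤ (l / 2) * (γ j - l / β - l * γ j) * ‖y - xb‖ ^ 2 := by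
    have hn : (0:ℝ) ≤ ‖y - xb‖ ^ 2 := sq_nonneg _
    nlinarith [mul_nonneg (mul_nonneg (mul_nonneg (by linarith : (0:ℝ) ≤ l/2)
      (by linarith : (0:ℝ) ≤ 1 - l)) (by linarith : (0:ℝ) ≤ γ j - γm)) hn]
  have hreal : (l / β) * ⟪ξ, y - xb⟫ + (l / 2) * (γm - l / β - l * γm) * ‖y - xb‖ ^ 2
      ≤ (l / β) * ⟪ξ, y - xb⟫ + (l / 2) * (γ j - l / β - l * γ j) * ‖y - xb‖ ^ 2 := by
    linarith
  have hsupx : g j xb = ⨆ i, g i xb := hj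
  calc (⨆ i, g i xb) + (((l / β) * ⟪ξ, y - xb⟫
        + (l / 2) * (γm - l / β - l * γm) * ‖y - xb‖ ^ 2 : ℝ) : EReal)
      ≤ (⨆ i, g i xb) + (((l / β) * ⟪ξ, y - xb⟫
        + (l / 2) * (γ j - l / β - l * γ j) * ‖y - xb‖ ^ 2 : ℝ) : EReal) :=
        add_le_add le_rfl (EReal.coe_le_coe_iff.mpr hreal)
    _ = g j xb + (((l / β) * ⟪ξ, y - xb⟫
        + (l / 2) * (γ j - l / β - l * γ j) * ‖y - xb‖ ^ 2 : ℝ) : EReal) := by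
        rw [hsupx]
    _ ≤ max (g j y) (g j xb) := key
    _ ≤ max (⨆ i, g i y) (⨆ i, g i xb) :=
        max_le_max (le_iSup (fun i => g i y) j) (le_iSup (fun i => g i xb) j)
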